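/- Let λ > 1/2, α > 0, 0 < β < α, δ > 0, and set γ = √(α² − β²). Then δβK_{λ+1}(δγ)/(γK_λ(δγ)) > (β/γ²)·[λ + 1/2 + √((λ − 1/2)² + δ²γ²)]. Equality holds if λ = 1/2 and the inequality is reversed for λ < 1/2. -/

import Mathlib

open Real MeasureTheory

/-- Modified Bessel function of the second kind. -/
noncomputable def besselK (ν x : ℝ) : ℝ :=
  ∫ t in Set.Ioi (0:ℝ), Real.exp (-x * Real.cosh t) * Real.cosh (ν * t)

open Filter Set Topology

set_option linter.unusedVariables false


lemma sq_le_sinh_sq (y : ℝ) : y ^ 2 ≤ Real.sinh y ^ 2 := by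
  rcases le_or_gt 0 y with h | h
  · nlinarith [Real.self_le_sinh_iff.2 h]
  · nlinarith [Real.sinh_le_self_iff.2 h.le]

lemma one_add_sq_half_le_cosh (t : ℝ) : 1 + t ^ 2 / 2 ≤ Real.cosh t := by
  have h := sq_le_sinh_sq (t / 2)
  have h2 : Real.cosh t = 2 * Real.sinh (t / 2) ^ 2 + 1 := by
    have ht : t = 2 * (t / 2) := by ring
    rw [ht, Real.cosh_two_mul, Real.cosh_sq]; ring
  nlinarith

lemma integrable_exp_quad {b : ℝ} (c : ℝ) (hb : 0 < b) :
    Integrable (fun t : ℝ => Real.exp (-b * t ^ 2 + c * t)) := by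
  have h : (fun t : ℝ => Real.exp (-b * t ^ 2 + c * t)) =
      fun t => Real.exp (c ^ 2 / (4 * b)) * Real.exp (-b * (t - c / (2 * b)) ^ 2) := by
    funext t; rw [← Real.exp_add]; congr 1; field_simp; ring
  rw [h]
  exact ((integrable_exp_neg_mul_sq hb).comp_sub_right (c / (2 * b))).const_mul _

lemma integrable_exp_cosh {x : ℝ} (a : ℝ) (hx : 0 < x) :
    Integrable (fun t : ℝ => Real.exp (a * t - x * Real.cosh t)) := by
  apply Integrable.mono' ((integrable_exp_quad a (by linarith : (0:ℝ) < x / 2)).const_mul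
    (Real.exp (-x)))
  · exact (Real.continuous_exp.comp (by continuity)).aestronglyMeasurable
  · filter_upwards with t
    rw [Real.norm_eq_abs, abs_of_pos (Real.exp_pos _), ← Real.exp_add]
    apply Real.exp_le_exp.2
    have := one_add_sq_half_le_cosh t
    nlinarith

lemma tendsto_quad_atBot {b c : ℝ} (hb : 0 < b) (l : Filter ℝ)
    (hl : Tendsto (fun t : ℝ => |t - c / (2 * b)|) l atTop) :
    Tendsto (fun t : ℝ => -b * t ^ 2 + c * t) l atBot := by
  have h : (fun t : ℝ => -b * t ^ 2 + c * t) =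
      fun t => -b * |t - c / (2 * b)| ^ 2 + c ^ 2 / (4 * b) := by
    funext t; rw [sq_abs]; field_simp; ring
  rw [h]
  apply tendsto_atBot_add_const_right
  exact (tendsto_const_mul_atBot_of_neg (by linarith)).2
    ((tendsto_pow_atTop two_ne_zero).comp hl)

lemma tendsto_exp_cosh_zero {x a : ℝ} (hx : 0 < x) (l : Filter ℝ)
    (hl : Tendsto (fun t : ℝ => |t - a / (2 * (x / 2))|) l atTop) :
    Tendsto (fun t : ℝ => Real.exp (a * t - x * Real.cosh t)) l (𝓝 0) := by
  have hquad : Tendsto (fun t : ℝ => Real.exp (-x) * Real.exp (-(x / 2) * t ^ 2 + a * t)) l (𝓝 0) := by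
    have := (Real.tendsto_exp_atBot.comp (tendsto_quad_atBot (by linarith : (0:ℝ) < x / 2) l hl)).const_mul (Real.exp (-x))
    simpa using this
  apply squeeze_zero (fun t => (Real.exp_pos _).le) _ hquad
  intro t
  rw [← Real.exp_add]
  apply Real.exp_le_exp.2
  have := one_add_sq_half_le_cosh t
  nlinarith

lemma abs_tendsto_atTop (c : ℝ) : Tendsto (fun t : ℝ => |t - c|) atTop atTop :=
  tendsto_abs_atTop_atTop.comp (tendsto_atTop_add_const_right _ _ tendsto_id)

lemma abs_tendsto_atBot (c : ℝ) : Tendsto (fun t : ℝ => |t - c|) atBot atTop :=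
  tendsto_abs_atBot_atTop.comp (tendsto_atBot_add_const_right _ _ tendsto_id)

/-- Master FTC lemma. -/
lemma integral_exp_cosh_deriv {x : ℝ} (a : ℝ) (hx : 0 < x) :
    ∫ t : ℝ, Real.exp (a * t - x * Real.cosh t) * (a - x * Real.sinh t) = 0 := by
  have hderiv : ∀ t : ℝ, HasDerivAt (fun t => Real.exp (a * t - x * Real.cosh t))
      (Real.exp (a * t - x * Real.cosh t) * (a - x * Real.sinh t)) t := by
    intro t
    have h : HasDerivAt (fun t : ℝ => a * t - x * Real.cosh t) (a - x * Real.sinh t) t := by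
      have h' := ((hasDerivAt_id' t).const_mul a).sub ((Real.hasDerivAt_cosh t).const_mul x)
      rw [mul_one] at h'
      exact h'
    exact h.exp
  have hint : Integrable (fun t : ℝ => Real.exp (a * t - x * Real.cosh t) * (a - x * Real.sinh t)) := by
    have h : (fun t : ℝ => Real.exp (a * t - x * Real.cosh t) * (a - x * Real.sinh t)) =
        fun t => a * Real.exp (a * t - x * Real.cosh t)
          - (x / 2) * Real.exp ((a + 1) * t - x * Real.cosh t)
          + (x / 2) * Real.exp ((a - 1) * t - x * Real.cosh t) := by
      funext t
      rw [Real.sinh_eq]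
      have e1 : (a + 1) * t - x * Real.cosh t = (a * t - x * Real.cosh t) + t := by ring
      have e2 : (a - 1) * t - x * Real.cosh t = (a * t - x * Real.cosh t) + (-t) := by ring
      rw [e1, e2, Real.exp_add, Real.exp_add]
      ring
    rw [h]
    exact (((integrable_exp_cosh a hx).const_mul a).sub
      (((integrable_exp_cosh (a + 1) hx)).const_mul (x / 2))).add
      (((integrable_exp_cosh (a - 1) hx)).const_mul (x / 2))
  have h0 := MeasureTheory.integral_of_hasDerivAt_of_tendsto hderiv hint
    (tendsto_exp_cosh_zero hx atBot (abs_tendsto_atBot _))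
    (tendsto_exp_cosh_zero hx atTop (abs_tendsto_atTop _))
  simpa using h0

noncomputable def LL (x a : ℝ) : ℝ := ∫ t : ℝ, Real.exp (a * t - x * Real.cosh t)

lemma LL_pos {x : ℝ} (a : ℝ) (hx : 0 < x) : 0 < LL x a := by
  rw [LL]
  rw [integral_pos_iff_support_of_nonneg (fun t => (Real.exp_pos _).le) (integrable_exp_cosh a hx)]
  have hs : (Function.support fun t : ℝ => Real.exp (a * t - x * Real.cosh t)) = Set.univ := by
    ext t; simp [Function.mem_support, (Real.exp_pos _).ne']
  rw [hs]
  simp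

lemma integral_comp_neg_real (f : ℝ → ℝ) : ∫ t : ℝ, f (-t) = ∫ t : ℝ, f t :=
  MeasurePreserving.integral_comp (Measure.measurePreserving_neg (volume : Measure ℝ))
    (Homeomorph.neg ℝ).measurableEmbedding f

lemma LL_neg_eq {x : ℝ} (a : ℝ) : LL x (-a) = LL x a := by
  have h : (fun t : ℝ => Real.exp (-a * t - x * Real.cosh t)) =
      (fun t : ℝ => Real.exp (a * t - x * Real.cosh t)) ∘ (fun t => -t) := by
    funext t; simp [Function.comp, Real.cosh_neg]
  rw [LL, LL, h]
  exact integral_comp_neg_real (fun t => Real.exp (a * t - x * Real.cosh t))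

lemma besselK_eq_LL {x : ℝ} (ν : ℝ) (hx : 0 < x) : besselK ν x = LL x ν / 2 := by
  have habs : (fun t : ℝ => Real.exp (-x * Real.cosh t) * Real.cosh (ν * t)) =
      fun t : ℝ => Real.exp (-x * Real.cosh |t|) * Real.cosh (ν * |t|) := by
    funext t
    rcases abs_cases t with ⟨h1, _⟩ | ⟨h1, _⟩
    · rw [h1]
    · rw [h1, Real.cosh_neg, mul_neg, Real.cosh_neg]
  have h2 : (2:ℝ) * besselK ν x = ∫ t : ℝ, Real.exp (-x * Real.cosh t) * Real.cosh (ν * t) := by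
    rw [besselK, ← integral_comp_abs (f := fun t => Real.exp (-x * Real.cosh t) * Real.cosh (ν * t))]
    exact congrArg _ (habs.symm)
  have h3 : (fun t : ℝ => Real.exp (-x * Real.cosh t) * Real.cosh (ν * t)) =
      fun t : ℝ => (Real.exp (ν * t - x * Real.cosh t) + Real.exp (-ν * t - x * Real.cosh t)) / 2 := by
    funext t
    rw [Real.cosh_eq (ν * t), show ν * t - x * Real.cosh t = -x * Real.cosh t + ν * t by ring,
      show -ν * t - x * Real.cosh t = -x * Real.cosh t + -(ν * t) by ring,
      Real.exp_add, Real.exp_add]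
    ring
  rw [h3] at h2
  rw [integral_div, integral_add (integrable_exp_cosh ν hx) (integrable_exp_cosh (-ν) hx)] at h2
  have h4 : (∫ t : ℝ, Real.exp (-ν * t - x * Real.cosh t)) = LL x (-ν) := rfl
  rw [h4, LL_neg_eq] at h2
  have : (2:ℝ) * besselK ν x = LL x ν := by rw [h2, LL]; ring
  linarith

lemma LL_rec {x : ℝ} (a : ℝ) (hx : 0 < x) :
    a * LL x a = x / 2 * (LL x (a + 1) - LL x (a - 1)) := by
  have h0 := integral_exp_cosh_deriv a hx
  have h : (fun t : ℝ => Real.exp (a * t - x * Real.cosh t) * (a - x * Real.sinh t)) =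
      fun t => a * Real.exp (a * t - x * Real.cosh t)
        - (x / 2) * Real.exp ((a + 1) * t - x * Real.cosh t)
        + (x / 2) * Real.exp ((a - 1) * t - x * Real.cosh t) := by
    funext t
    rw [Real.sinh_eq]
    have e1 : (a + 1) * t - x * Real.cosh t = (a * t - x * Real.cosh t) + t := by ring
    have e2 : (a - 1) * t - x * Real.cosh t = (a * t - x * Real.cosh t) + (-t) := by ring
    rw [e1, e2, Real.exp_add, Real.exp_add]
    ring
  rw [h] at h0
  have i1 : Integrable (fun t : ℝ => a * Real.exp (a * t - x * Real.cosh t)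
      - x / 2 * Real.exp ((a + 1) * t - x * Real.cosh t)) := by
    exact ((integrable_exp_cosh a hx).const_mul a).sub
      ((integrable_exp_cosh (a + 1) hx).const_mul (x / 2))
  have i2 : Integrable (fun t : ℝ => x / 2 * Real.exp ((a - 1) * t - x * Real.cosh t)) :=
    (integrable_exp_cosh (a - 1) hx).const_mul (x / 2)
  have i3 : Integrable (fun t : ℝ => a * Real.exp (a * t - x * Real.cosh t)) :=
    (integrable_exp_cosh a hx).const_mul a
  have i4 : Integrable (fun t : ℝ => x / 2 * Real.exp ((a + 1) * t - x * Real.cosh t)) :=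
    (integrable_exp_cosh (a + 1) hx).const_mul (x / 2)
  rw [integral_add i1 i2, integral_sub i3 i4,
    integral_const_mul, integral_const_mul, integral_const_mul] at h0
  rw [LL, LL, LL]
  linarith [h0]

noncomputable def AA (x d p : ℝ) : ℝ := LL (2 * x * Real.cosh p) d

lemma cosh_x_pos {x : ℝ} (hx : 0 < x) (p : ℝ) : 0 < 2 * x * Real.cosh p := by
  have := Real.cosh_pos p; positivity

lemma AA_pos {x : ℝ} (hx : 0 < x) (d p : ℝ) : 0 < AA x d p := LL_pos d (cosh_x_pos hx p)

lemma AA_eq_integral (x d p : ℝ) :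
    AA x d p = ∫ q : ℝ, Real.exp (d * q - 2 * x * Real.cosh p * Real.cosh q) := rfl

lemma AA_even (x d p : ℝ) : AA x d (-p) = AA x d p := by
  rw [AA, AA, Real.cosh_neg]

lemma AA_le {x : ℝ} (hx : 0 < x) (d p : ℝ) :
    AA x d p ≤ Real.exp (-x * Real.cosh p) * LL x d := by
  rw [AA_eq_integral, LL, ← integral_const_mul]
  apply integral_mono (integrable_exp_cosh d (cosh_x_pos hx p))
    ((integrable_exp_cosh d hx).const_mul _)
  intro q
  simp only []
  rw [← Real.exp_add]
  apply Real.exp_le_exp.2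
  have h1 := Real.one_le_cosh p
  have h2 := Real.one_le_cosh q
  nlinarith [mul_nonneg hx.le (mul_nonneg (sub_nonneg.2 h1) (sub_nonneg.2 h2))]

lemma AA_meas (x d : ℝ) : AEStronglyMeasurable (fun p => AA x d p) volume := by
  have h : (fun p => AA x d p) =
      fun p => ∫ q : ℝ, (fun z : ℝ × ℝ => Real.exp (d * z.2 - 2 * x * Real.cosh z.1 * Real.cosh z.2)) (p, q) := rfl
  rw [h]
  have hc : AEStronglyMeasurable
      (fun z : ℝ × ℝ => Real.exp (d * z.2 - 2 * x * Real.cosh z.1 * Real.cosh z.2))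
      (volume.prod volume) :=
    (Real.continuous_exp.comp (by continuity)).aestronglyMeasurable
  exact hc.integral_prod_right'

lemma intA {x : ℝ} (hx : 0 < x) (c d : ℝ) :
    Integrable (fun p : ℝ => Real.exp (c * p) * AA x d p) := by
  apply Integrable.mono' ((integrable_exp_cosh c hx).const_mul (LL x d))
  · exact (Real.continuous_exp.comp (by continuity)).aestronglyMeasurable.mul (AA_meas x d)
  · filter_upwards with p
    rw [Real.norm_eq_abs, abs_of_pos (mul_pos (Real.exp_pos _) (AA_pos hx d p))]
    calc Real.exp (c * p) * AA x d p
        ≤ Real.exp (c * p) * (Real.exp (-x * Real.cosh p) * LL x d) := by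
          exact mul_le_mul_of_nonneg_left (AA_le hx d p) (Real.exp_pos _).le
      _ = (Real.exp (c * p) * Real.exp (-x * Real.cosh p)) * LL x d := by ring
      _ = LL x d * Real.exp (c * p - x * Real.cosh p) := by
          rw [← Real.exp_add, show c * p + -x * Real.cosh p = c * p - x * Real.cosh p by ring,
            mul_comm]

lemma stepA {x : ℝ} (hx : 0 < x) (b s : ℝ) :
    (∫ p : ℝ, Real.exp (b * (2 * p - s) - x * Real.cosh (2 * p - s))) = (1 / 2) * LL x b := by
  have h1 : (∫ p : ℝ, Real.exp (b * (2 * p - s) - x * Real.cosh (2 * p - s)))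
      = ∫ p : ℝ, (fun w : ℝ => Real.exp (b * (w - s) - x * Real.cosh (w - s))) (2 * p) := rfl
  rw [h1, MeasureTheory.Measure.integral_comp_mul_left
    (fun w : ℝ => Real.exp (b * (w - s) - x * Real.cosh (w - s))) 2]
  have h2 : (∫ w : ℝ, Real.exp (b * (w - s) - x * Real.cosh (w - s)))
      = ∫ w : ℝ, Real.exp (b * w - x * Real.cosh w) := by
    exact integral_sub_right_eq_self (fun w : ℝ => Real.exp (b * w - x * Real.cosh w)) s
  rw [h2]
  rw [LL, smul_eq_mul]
  norm_num

lemma int_g2ps {x : ℝ} (hx : 0 < x) (b s : ℝ) :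
    Integrable (fun p : ℝ => Real.exp (b * (2 * p - s) - x * Real.cosh (2 * p - s))) := by
  have h1 : Integrable (fun w : ℝ => Real.exp (b * (w - s) - x * Real.cosh (w - s))) :=
    (integrable_exp_cosh b hx).comp_sub_right s
  have h2 := h1.comp_mul_left' (two_ne_zero (α := ℝ))
  exact h2

lemma prod_rep {x : ℝ} (hx : 0 < x) (a b : ℝ) :
    LL x a * LL x b = 2 * ∫ p : ℝ, Real.exp ((a + b) * p) * AA x (a - b) p := by
  have hfint := integrable_exp_cosh a hx
  have hgint := integrable_exp_cosh b hx
  set F : ℝ × ℝ → ℝ := fun z =>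
    Real.exp (a * z.1 - x * Real.cosh z.1) *
      Real.exp (b * (2 * z.2 - z.1) - x * Real.cosh (2 * z.2 - z.1)) with hF
  have hcont : Continuous F := by
    apply Continuous.mul
    · exact Real.continuous_exp.comp (by continuity)
    · exact Real.continuous_exp.comp (by continuity)
  have hinner : ∀ s : ℝ, Integrable (fun p : ℝ => F (s, p)) := by
    intro s
    simp only [hF]
    exact (int_g2ps hx b s).const_mul _
  have hnorm : ∀ s : ℝ, (∫ p : ℝ, ‖F (s, p)‖)
      = ((1 / 2) * LL x b) * Real.exp (a * s - x * Real.cosh s) := by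
    intro s
    have h1 : (fun p : ℝ => ‖F (s, p)‖) = fun p : ℝ => F (s, p) := by
      funext p
      exact norm_of_nonneg (mul_nonneg (Real.exp_pos _).le (Real.exp_pos _).le)
    rw [h1]
    simp only [hF]
    rw [integral_const_mul, stepA hx b s]
    ring
  have hjoint : Integrable F (volume.prod volume) := by
    rw [integrable_prod_iff hcont.aestronglyMeasurable]
    refine ⟨Filter.Eventually.of_forall hinner, ?_⟩
    have h2 : (fun s : ℝ => ∫ p : ℝ, ‖F (s, p)‖)
        = fun s : ℝ => ((1 / 2) * LL x b) * Real.exp (a * s - x * Real.cosh s) := funext hnorm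
    rw [h2]
    exact hfint.const_mul _
  -- LHS as iterated integral
  have e1 : LL x a * LL x b = 2 * ∫ s : ℝ, ∫ p : ℝ, F (s, p) := by
    have h3 : ∀ s : ℝ, (∫ p : ℝ, F (s, p))
        = ((1 / 2) * LL x b) * Real.exp (a * s - x * Real.cosh s) := by
      intro s
      simp only [hF]
      rw [integral_const_mul, stepA hx b s]
      ring
    rw [funext h3, integral_const_mul, LL, LL]
    ring
  -- swap
  have e2 : (∫ s : ℝ, ∫ p : ℝ, F (s, p)) = ∫ p : ℝ, ∫ s : ℝ, F (s, p) :=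
    integral_integral_swap hjoint
  -- inner substitution s = p + q
  have e3 : ∀ p : ℝ, (∫ s : ℝ, F (s, p)) = ∫ q : ℝ, F (p + q, p) := by
    intro p
    exact (integral_add_left_eq_self (μ := volume) (fun s : ℝ => F (s, p)) p).symm
  -- pointwise identity
  have e4 : ∀ p q : ℝ, F (p + q, p) = Real.exp ((a + b) * p) *
      Real.exp ((a - b) * q - 2 * x * Real.cosh p * Real.cosh q) := by
    intro p q
    simp only [hF]
    have h4 : 2 * p - (p + q) = p - q := by ring
    rw [h4, ← Real.exp_add, ← Real.exp_add]
    congr 1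
    rw [Real.cosh_add, Real.cosh_sub]
    ring
  rw [e1, e2]
  congr 1
  apply integral_congr_ae
  filter_upwards with p
  rw [e3 p, funext (e4 p), integral_const_mul, AA_eq_integral]

lemma AA_id {x : ℝ} (hx : 0 < x) (p : ℝ) :
    AA x 1 p = x * Real.cosh p * (AA x 2 p - AA x 0 p) := by
  have hc := cosh_x_pos hx p
  have h := LL_rec (x := 2 * x * Real.cosh p) 1 hc
  norm_num at h
  rw [AA, AA, AA]
  linarith [h]

lemma continuous_tanh' : Continuous Real.tanh := by
  have h : Real.tanh = fun x => Real.sinh x / Real.cosh x :=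
    funext fun x => Real.tanh_eq_sinh_div_cosh x
  rw [h]
  exact Real.continuous_sinh.div Real.continuous_cosh fun x => (Real.cosh_pos x).ne'

lemma sinh_abs_le_cosh (y : ℝ) : |Real.sinh y| ≤ Real.cosh y := by
  rw [abs_le]
  constructor
  · nlinarith [Real.exp_pos y, Real.cosh_add_sinh y]
  · nlinarith [Real.exp_pos (-y), Real.cosh_sub_sinh y]

lemma abs_tanh_le_one' (p : ℝ) : |Real.tanh p| ≤ 1 := by
  rw [Real.tanh_eq_sinh_div_cosh, abs_div, abs_of_pos (Real.cosh_pos p),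
    div_le_one (Real.cosh_pos p)]
  exact sinh_abs_le_cosh p

lemma int_tanh {x : ℝ} (hx : 0 < x) (c : ℝ) :
    Integrable (fun p : ℝ => Real.exp (c * p) * (Real.tanh p * AA x 1 p)) := by
  apply Integrable.mono' (intA hx c 1)
  · exact (Real.continuous_exp.comp (by continuity)).aestronglyMeasurable.mul
      (continuous_tanh'.aestronglyMeasurable.mul (AA_meas x 1))
  · filter_upwards with p
    have hA := AA_pos hx 1 p
    have ht : |Real.tanh p| ≤ 1 := abs_tanh_le_one' p
    rw [Real.norm_eq_abs, abs_mul, abs_mul, abs_of_pos (Real.exp_pos _), abs_of_pos hA]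
    calc Real.exp (c * p) * (|Real.tanh p| * AA x 1 p)
        ≤ Real.exp (c * p) * (1 * AA x 1 p) := by
          apply mul_le_mul_of_nonneg_left _ (Real.exp_pos _).le
          exact mul_le_mul_of_nonneg_right ht hA.le
      _ = Real.exp (c * p) * AA x 1 p := by ring

lemma int_sinh_tanh {x : ℝ} (hx : 0 < x) (m : ℝ) :
    Integrable (fun p : ℝ => Real.sinh (m * p) * Real.tanh p * AA x 1 p) := by
  have hbint : Integrable (fun p : ℝ => (1 / 2 : ℝ) *
      (Real.exp (m * p) * AA x 1 p + Real.exp (-m * p) * AA x 1 p)) :=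
    ((intA hx m 1).add (intA hx (-m) 1)).const_mul _
  apply Integrable.mono' hbint
  · exact ((Real.continuous_sinh.comp (by continuity)).mul
      continuous_tanh').aestronglyMeasurable.mul (AA_meas x 1)
  · filter_upwards with p
    have hA := AA_pos hx 1 p
    have ht : |Real.tanh p| ≤ 1 := abs_tanh_le_one' p
    have hs : |Real.sinh (m * p)| ≤ Real.cosh (m * p) := sinh_abs_le_cosh _
    rw [Real.norm_eq_abs, abs_mul, abs_mul, abs_of_pos hA]
    have hc : Real.cosh (m * p) = (Real.exp (m * p) + Real.exp (-m * p)) / 2 := by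
      rw [Real.cosh_eq]; ring_nf
    calc |Real.sinh (m * p)| * |Real.tanh p| * AA x 1 p
        ≤ Real.cosh (m * p) * 1 * AA x 1 p := by
          apply mul_le_mul_of_nonneg_right _ hA.le
          exact mul_le_mul hs ht (abs_nonneg _) (Real.cosh_pos _).le
      _ = 1 / 2 * (Real.exp (m * p) * AA x 1 p + Real.exp (-m * p) * AA x 1 p) := by
          rw [hc]; ring

lemma sym_eq {x : ℝ} (hx : 0 < x) (m : ℝ) :
    (∫ p : ℝ, Real.exp (m * p) * (Real.tanh p * AA x 1 p))
      = ∫ p : ℝ, Real.sinh (m * p) * Real.tanh p * AA x 1 p := by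
  have hrefl := integral_comp_neg_real (fun p => Real.exp (m * p) * (Real.tanh p * AA x 1 p))
  have hcongr : (fun t : ℝ => Real.exp (m * -t) * (Real.tanh (-t) * AA x 1 (-t)))
      = fun t : ℝ => -(Real.exp (-m * t) * (Real.tanh t * AA x 1 t)) := by
    funext t
    rw [Real.tanh_neg, AA_even, show m * -t = -m * t by ring]
    ring
  rw [hcongr] at hrefl
  rw [integral_neg] at hrefl
  -- hrefl : -(∫ exp(-m t)(tanh t AA t)) = ∫ exp(m t)(tanh t AA t)
  have hpt : (fun p : ℝ => Real.sinh (m * p) * Real.tanh p * AA x 1 p)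
      = fun p : ℝ => (1 / 2 : ℝ) * (Real.exp (m * p) * (Real.tanh p * AA x 1 p))
        - (1 / 2 : ℝ) * (Real.exp (-m * p) * (Real.tanh p * AA x 1 p)) := by
    funext p
    rw [Real.sinh_eq, show -(m * p) = -m * p by ring]
    ring
  rw [hpt, integral_sub ((int_tanh hx m).const_mul _) ((int_tanh hx (-m)).const_mul _),
    integral_const_mul, integral_const_mul]
  linarith [hrefl]

lemma S_sign_pos {x m : ℝ} (hx : 0 < x) (hm : 0 < m) :
    0 < ∫ p : ℝ, Real.sinh (m * p) * Real.tanh p * AA x 1 p := by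
  have hnonneg : ∀ p : ℝ, 0 ≤ Real.sinh (m * p) * Real.tanh p * AA x 1 p := by
    intro p
    apply mul_nonneg _ (AA_pos hx 1 p).le
    rcases le_or_gt 0 p with h | h
    · apply mul_nonneg (Real.sinh_nonneg_iff.2 (by positivity))
      rw [Real.tanh_eq_sinh_div_cosh]
      exact div_nonneg (Real.sinh_nonneg_iff.2 h) (Real.cosh_pos p).le
    · have h1 : Real.sinh (m * p) ≤ 0 := Real.sinh_nonpos_iff.2 (by nlinarith)
      have h2 : Real.tanh p ≤ 0 := by
        rw [Real.tanh_eq_sinh_div_cosh]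
        exact div_nonpos_of_nonpos_of_nonneg (Real.sinh_nonpos_iff.2 h.le) (Real.cosh_pos p).le
      nlinarith
  rw [integral_pos_iff_support_of_nonneg hnonneg (int_sinh_tanh hx m)]
  have hsub : Set.Ioi (0:ℝ) ⊆ Function.support
      (fun p : ℝ => Real.sinh (m * p) * Real.tanh p * AA x 1 p) := by
    intro p hp
    have hp0 : (0:ℝ) < p := hp
    apply ne_of_gt
    apply mul_pos _ (AA_pos hx 1 p)
    apply mul_pos (Real.sinh_pos_iff.2 (by positivity))
    rw [Real.tanh_eq_sinh_div_cosh]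
    exact div_pos (Real.sinh_pos_iff.2 hp0) (Real.cosh_pos p)
  calc (0:ENNReal) < volume (Set.Ioi (0:ℝ)) := by simp [Real.volume_Ioi]
    _ ≤ _ := measure_mono hsub

lemma D_rep {x : ℝ} (hx : 0 < x) (lam : ℝ) :
    x * (LL x (lam + 1) * LL x (lam - 1) - LL x lam * LL x lam) - LL x lam * LL x (lam - 1)
      = 2 * ∫ p : ℝ, Real.sinh ((2 * lam - 1) * p) * Real.tanh p * AA x 1 p := by
  rw [prod_rep hx (lam + 1) (lam - 1), prod_rep hx lam lam, prod_rep hx lam (lam - 1)]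
  rw [show lam + 1 + (lam - 1) = 2 * lam by ring, show lam + 1 - (lam - 1) = (2:ℝ) by ring,
    show lam + lam = 2 * lam by ring, show lam - lam = (0:ℝ) by ring,
    show lam + (lam - 1) = 2 * lam - 1 by ring, show lam - (lam - 1) = (1:ℝ) by ring]
  rw [← sym_eq hx (2 * lam - 1)]
  have i2 := intA hx (2 * lam) 2
  have i0 := intA hx (2 * lam) 0
  have i1 := intA hx (2 * lam - 1) 1
  have key : (∫ p : ℝ, (x * (Real.exp (2 * lam * p) * AA x 2 p
        - Real.exp (2 * lam * p) * AA x 0 p)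
      - Real.exp ((2 * lam - 1) * p) * AA x 1 p))
      = ∫ p : ℝ, Real.exp ((2 * lam - 1) * p) * (Real.tanh p * AA x 1 p) := by
    apply integral_congr_ae
    filter_upwards with p
    have hid := AA_id hx p
    have he : Real.exp (2 * lam * p) = Real.exp ((2 * lam - 1) * p) * Real.exp p := by
      rw [← Real.exp_add]; congr 1; ring
    have hes : Real.exp p = Real.cosh p + Real.sinh p := (Real.cosh_add_sinh p).symm
    have hcp : Real.cosh p ≠ 0 := (Real.cosh_pos p).ne'
    have hts : Real.tanh p * AA x 1 p = x * Real.sinh p * (AA x 2 p - AA x 0 p) := by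
      rw [Real.tanh_eq_sinh_div_cosh, hid]; field_simp
    rw [hts, hid, he, hes]
    ring
  have split : (∫ p : ℝ, (x * (Real.exp (2 * lam * p) * AA x 2 p
        - Real.exp (2 * lam * p) * AA x 0 p)
      - Real.exp ((2 * lam - 1) * p) * AA x 1 p))
      = x * ((∫ p : ℝ, Real.exp (2 * lam * p) * AA x 2 p)
          - ∫ p : ℝ, Real.exp (2 * lam * p) * AA x 0 p)
        - ∫ p : ℝ, Real.exp ((2 * lam - 1) * p) * AA x 1 p := by
    have isub : Integrable (fun p : ℝ => x * (Real.exp (2 * lam * p) * AA x 2 p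
        - Real.exp (2 * lam * p) * AA x 0 p)) := by
      exact (i2.sub i0).const_mul x
    rw [integral_sub isub i1, integral_const_mul, integral_sub i2 i0]
  have h := split.symm.trans key
  linear_combination 2 * h

section Final

variable {x lam : ℝ}

lemma besselK_pos (ν : ℝ) (hx : 0 < x) : 0 < besselK ν x := by
  rw [besselK_eq_LL ν hx]; linarith [LL_pos ν hx]

lemma besselK_rec (hx : 0 < x) (lam : ℝ) :
    2 * lam * besselK lam x = x * besselK (lam + 1) x - x * besselK (lam - 1) x := by
  have h := LL_rec lam hx
  rw [besselK_eq_LL lam hx, besselK_eq_LL (lam + 1) hx, besselK_eq_LL (lam - 1) hx]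
  field_simp
  linarith [h]

lemma DK_eq (hx : 0 < x) (lam : ℝ) :
    x * (besselK (lam + 1) x * besselK (lam - 1) x - besselK lam x * besselK lam x)
      - besselK lam x * besselK (lam - 1) x
    = (1 / 2) * ∫ p : ℝ, Real.sinh ((2 * lam - 1) * p) * Real.tanh p * AA x 1 p := by
  rw [besselK_eq_LL lam hx, besselK_eq_LL (lam + 1) hx, besselK_eq_LL (lam - 1) hx]
  have h := D_rep hx lam
  nlinarith [h]

lemma DK_pos (hx : 0 < x) (hlam : 1 / 2 < lam) :
    0 < x * (besselK (lam + 1) x * besselK (lam - 1) x - besselK lam x * besselK lam x)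
      - besselK lam x * besselK (lam - 1) x := by
  rw [DK_eq hx lam]
  have := S_sign_pos hx (show 0 < 2 * lam - 1 by linarith)
  linarith

lemma DK_neg (hx : 0 < x) (hlam : lam < 1 / 2) :
    x * (besselK (lam + 1) x * besselK (lam - 1) x - besselK lam x * besselK lam x)
      - besselK lam x * besselK (lam - 1) x < 0 := by
  rw [DK_eq hx lam]
  have hpos := S_sign_pos hx (show 0 < -(2 * lam - 1) by linarith)
  have hneg : (∫ p : ℝ, Real.sinh ((2 * lam - 1) * p) * Real.tanh p * AA x 1 p)
      = -∫ p : ℝ, Real.sinh (-(2 * lam - 1) * p) * Real.tanh p * AA x 1 p := by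
    rw [← integral_neg]
    apply integral_congr_ae
    filter_upwards with p
    rw [show -(2 * lam - 1) * p = -((2 * lam - 1) * p) by ring, Real.sinh_neg]
    ring
  rw [hneg]
  linarith

lemma besselK_neg_nu (ν x : ℝ) : besselK (-ν) x = besselK ν x := by
  unfold besselK
  apply setIntegral_congr_ae measurableSet_Ioi
  filter_upwards with t _
  rw [show -ν * t = -(ν * t) by ring, Real.cosh_neg]

end Final

set_option maxHeartbeats 1600000 in
theorem stmt_7 (lam α β δ γ : ℝ) (hα : 0 < α) (hβ : 0 < β) (hβα : β < α) (hδ : 0 < δ)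
    (hγ : γ = Real.sqrt (α ^ 2 - β ^ 2)) :
    (1 / 2 < lam → δ * β * besselK (lam + 1) (δ * γ) / (γ * besselK lam (δ * γ)) >
      β / γ ^ 2 * (lam + 1 / 2 + Real.sqrt ((lam - 1 / 2) ^ 2 + δ ^ 2 * γ ^ 2))) ∧
    (lam = 1 / 2 → δ * β * besselK (lam + 1) (δ * γ) / (γ * besselK lam (δ * γ)) =
      β / γ ^ 2 * (lam + 1 / 2 + Real.sqrt ((lam - 1 / 2) ^ 2 + δ ^ 2 * γ ^ 2))) ∧
    (lam < 1 / 2 → δ * β * besselK (lam + 1) (δ * γ) / (γ * besselK lam (δ * γ)) <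
      β / γ ^ 2 * (lam + 1 / 2 + Real.sqrt ((lam - 1 / 2) ^ 2 + δ ^ 2 * γ ^ 2))) := by
  have h1 : 0 < α ^ 2 - β ^ 2 := by nlinarith
  have hγ0 : 0 < γ := by rw [hγ]; exact Real.sqrt_pos.2 h1
  have hx : 0 < δ * γ := mul_pos hδ hγ0
  set x : ℝ := δ * γ with hxdef
  have hx2 : (lam - 1 / 2) ^ 2 + δ ^ 2 * γ ^ 2 = (lam - 1 / 2) ^ 2 + x ^ 2 := by
    rw [hxdef]; ring
  rw [hx2]
  set s : ℝ := Real.sqrt ((lam - 1 / 2) ^ 2 + x ^ 2) with hsdef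
  have hs : s ^ 2 = (lam - 1 / 2) ^ 2 + x ^ 2 := Real.sq_sqrt (by positivity)
  have hs0 : 0 ≤ s := Real.sqrt_nonneg _
  set K0 : ℝ := besselK lam x with hK0def
  set K1 : ℝ := besselK (lam + 1) x with hK1def
  set Km : ℝ := besselK (lam - 1) x with hKmdef
  have hK0 : 0 < K0 := besselK_pos lam hx
  have hK1 : 0 < K1 := besselK_pos (lam + 1) hx
  have hKm : 0 < Km := besselK_pos (lam - 1) hx
  have hrec2 : 2 * lam * K0 = x * K1 - x * Km := besselK_rec hx lam
  have hkey : (x * Km + (lam - 1 / 2) * K0) ^ 2 - (s * K0) ^ 2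
      = x * (x * (K1 * Km - K0 * K0) - K0 * Km) := by
    linear_combination (-(K0 ^ 2)) * hs + (x * Km) * hrec2
  have hgoal_eq : ∀ R : ℝ, β / γ ^ 2 * R * (γ * K0) = (β / γ) * (R * K0) := by
    intro R; field_simp
  have hlhs_eq : δ * β * K1 = (β / γ) * (x * K1) := by
    rw [hxdef]; field_simp
  have hβγ : 0 < β / γ := div_pos hβ hγ0
  have hDp : 1 / 2 < lam → 0 < x * (K1 * Km - K0 * K0) - K0 * Km := fun h => DK_pos hx h
  have hDn : lam < 1 / 2 → x * (K1 * Km - K0 * K0) - K0 * Km < 0 := fun h => DK_neg hx h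
  clear_value x s K0 K1 Km
  refine ⟨fun hlam => ?_, fun hlam => ?_, fun hlam => ?_⟩
  · -- lam > 1/2
    have hD := hDp hlam
    have h5 : (s * K0) ^ 2 < (x * Km + (lam - 1 / 2) * K0) ^ 2 := by
      nlinarith [mul_pos hx hD]
    have haB : 0 < s * K0 + (x * Km + (lam - 1 / 2) * K0) := by
      have h7 : 0 < (lam - 1 / 2) * K0 := by
        apply mul_pos _ hK0; linarith
      nlinarith [mul_nonneg hs0 hK0.le, mul_pos hx hKm]
    have h6 : s * K0 < x * Km + (lam - 1 / 2) * K0 := by nlinarith [h5, haB]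
    have hcore : (lam + 1 / 2 + s) * K0 < x * K1 := by nlinarith [h6, hrec2]
    rw [gt_iff_lt, lt_div_iff₀ (mul_pos hγ0 hK0)]
    rw [hgoal_eq, hlhs_eq]
    exact mul_lt_mul_of_pos_left hcore hβγ
  · -- lam = 1/2
    subst hlam
    have hKm_eq : Km = K0 := by
      rw [hKmdef, hK0def, show (1 / 2 : ℝ) - 1 = -(1 / 2) by norm_num, besselK_neg_nu]
    have hxK1 : x * K1 = (x + 1) * K0 := by
      rw [hKm_eq] at hrec2; linarith
    have hso : s = x := by
      rw [hsdef, show (1 / 2 - 1 / 2 : ℝ) ^ 2 + x ^ 2 = x ^ 2 by ring, Real.sqrt_sq hx.le]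
    have hcore : (1 / 2 + 1 / 2 + s) * K0 = x * K1 := by rw [hso, hxK1]; ring
    rw [div_eq_iff (ne_of_gt (mul_pos hγ0 hK0)), hlhs_eq, hgoal_eq, hcore]
  · -- lam < 1/2
    have hD := hDn hlam
    have h5 : (x * Km + (lam - 1 / 2) * K0) ^ 2 < (s * K0) ^ 2 := by
      nlinarith [mul_pos hx (neg_pos.2 hD)]
    have hspos : 0 < s := by nlinarith [hs, hs0, sq_nonneg (lam - 1 / 2), pow_pos hx 2]
    have h6 : x * Km + (lam - 1 / 2) * K0 < s * K0 := by
      nlinarith [h5, mul_pos hspos hK0]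
    have hcore : x * K1 < (lam + 1 / 2 + s) * K0 := by nlinarith [h6, hrec2]
    rw [div_lt_iff₀ (mul_pos hγ0 hK0)]
    rw [hgoal_eq, hlhs_eq]
    exact mul_lt_mul_of_pos_left hcore hβγ
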